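/- Let X be a real normed space with a linear subspace X_h, let Y be a real Hilbert space with a closed subspace Y_h, and let b : X × Y → ℝ be a bilinear form satisfying the continuity bound |b(x, v)| ≤ C‖x‖_X ‖v‖_Y for all x ∈ X, v ∈ Y, and the inf–sup condition γ‖x‖_X ≤ sup_{0 ≠ v ∈ Y} b(x, v)/‖v‖_Y for all x ∈ X, with constants C > 0 and γ > 0. Suppose Π : Y → Y_h is a bounded linear operator (a Fortin operator) such that b(x_h, v − Π v) = 0 for all x_h ∈ X_h and all v ∈ Y. Fix u ∈ X satisfying the zero-data-oscillation condition b(u, v − Π v) = 0 for all v ∈ Y, fix w ∈ X_h, and let ε_h ∈ Y_h satisfy ⟨ε_h, v_h⟩_Y = b(u, v_h) − b(w, v_h) for all v_h ∈ Y_h. Then γ‖u − w‖_X ≤ ‖Π‖ ‖ε_h‖_Y and ‖ε_h‖_Y ≤ C ‖u − w‖_X. -/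

import Mathlib

/-- Abstract reliability–efficiency of the discrete DPG loss: with a bounded,
inf–sup stable bilinear form `b`, a Fortin operator `Pi` onto the discrete test
space `Y_h`, zero data oscillation for the exact solution `u`, and the discrete
error representation `ε_h`, one has
`γ‖u - w‖ ≤ ‖Pi‖ ‖ε_h‖` and `‖ε_h‖ ≤ C ‖u - w‖`. -/
theorem dpg_reliability_efficiency
    {X Y : Type*} [NormedAddCommGroup X] [NormedSpace ℝ X]
    [NormedAddCommGroup Y] [InnerProductSpace ℝ Y]
    (Xh : Submodule ℝ X) (Yh : Submodule ℝ Y) (hYh : IsClosed (Yh : Set Y))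
    (b : X →ₗ[ℝ] Y →ₗ[ℝ] ℝ) (C γ : ℝ) (hC : 0 < C) (hγ : 0 < γ)
    (hcont : ∀ (x : X) (v : Y), |b x v| ≤ C * ‖x‖ * ‖v‖)
    (hinfsup : ∀ x : X,
      γ * ‖x‖ ≤ sSup {r : ℝ | ∃ v : Y, v ≠ 0 ∧ r = b x v / ‖v‖})
    (Pi : Y →L[ℝ] Y) (hPirange : ∀ v : Y, Pi v ∈ Yh)
    (hFortin : ∀ xh ∈ Xh, ∀ v : Y, b xh (v - Pi v) = 0)
    (u : X) (hosc : ∀ v : Y, b u (v - Pi v) = 0)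
    (w : X) (hw : w ∈ Xh)
    (εh : Y) (hεh : εh ∈ Yh)
    (hres : ∀ vh ∈ Yh, (inner ℝ εh vh : ℝ) = b u vh - b w vh) :
    γ * ‖u - w‖ ≤ ‖Pi‖ * ‖εh‖ ∧ ‖εh‖ ≤ C * ‖u - w‖ := by
  constructor
  · -- reliability
    refine (hinfsup (u - w)).trans (Real.sSup_le ?_ (by positivity))
    rintro r ⟨v, hv, rfl⟩
    have key : b (u - w) v = (inner ℝ εh (Pi v) : ℝ) := by
      have h1 : b u (v - Pi v) = 0 := hosc v
      have h2 : b w (v - Pi v) = 0 := hFortin w hw v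
      have := hres (Pi v) (hPirange v)
      simp only [map_sub, LinearMap.sub_apply] at *
      linarith
    have hb : b (u - w) v ≤ ‖Pi‖ * ‖εh‖ * ‖v‖ := by
      rw [key]
      calc (inner ℝ εh (Pi v) : ℝ) ≤ ‖εh‖ * ‖Pi v‖ := real_inner_le_norm _ _
        _ ≤ ‖εh‖ * (‖Pi‖ * ‖v‖) := by
            gcongr; exact Pi.le_opNorm v
        _ = ‖Pi‖ * ‖εh‖ * ‖v‖ := by ring
    rw [div_le_iff₀ (norm_pos_iff.mpr hv)]
    exact hb
  · -- efficiency
    rcases eq_or_ne εh 0 with h | h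
    · simp [h]; positivity
    have h1 : ‖εh‖ ^ 2 = b (u - w) εh := by
      rw [← real_inner_self_eq_norm_sq, hres εh hεh, map_sub, LinearMap.sub_apply]
    have h2 : b (u - w) εh ≤ C * ‖u - w‖ * ‖εh‖ :=
      (le_abs_self _).trans (hcont _ _)
    have hε : 0 < ‖εh‖ := norm_pos_iff.mpr h
    nlinarith [sq_nonneg ‖εh‖]
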